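/- Let X = ℝ^d with Lebesgue measure, ψ ∈ Ψ(a,b), ζ, ν ∈ EΨ(a,b), ζ = ψ·ν. Then, as A ranges over non-degenerate d×d matrices, lim_{|det A| → ∞} (log ‖D_A‖(G(ψ)→G(ζ)))/(log |det A|) = 1/a and lim_{|det A| → 0} (log ‖D_A‖(G(ψ)→G(ζ)))/(log |det A|) = 1/b. -/

import Mathlib

noncomputable section

open MeasureTheory Filter Set Topology
open scoped ENNReal NNReal

/-- The set of exponents `p` with `a < p < b` (where `b : ℝ≥0∞` may be `∞`). -/
def expSet (a : ℝ) (b : ℝ≥0∞) : Set ℝ := {p : ℝ | a < p ∧ ENNReal.ofReal p < b}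

/-- The filter of real exponents `p` tending to `b` from below (`p → b⁻`);
when `b = ∞` this amounts to `p → ∞`. -/
def atBbelow (b : ℝ≥0∞) : Filter ℝ :=
  Filter.comap ENNReal.ofReal (nhdsWithin b (Set.Iio b))

/-- The class `EΨ(a,b)`: continuous `ψ` on `(a,b)` with `ψ(p) ≥ 1` and `ψ(b-0) = ∞`. -/
def IsEPsi (a : ℝ) (b : ℝ≥0∞) (ψ : ℝ → ℝ) : Prop :=
  ContinuousOn ψ (expSet a b) ∧ (∀ p ∈ expSet a b, 1 ≤ ψ p) ∧
    Filter.Tendsto ψ (atBbelow b) Filter.atTop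

/-- Norm of the Bilateral Grand Lebesgue space `G(ψ; a, b)` over a measure `μ`:
`‖f‖_{G(ψ)} = sup_{p ∈ (a,b)} ‖f‖_{L^p(μ)} / ψ(p)`, with values in `ℝ≥0∞`. -/
def GNorm {α : Type*} [MeasurableSpace α] (μ : Measure α) (a : ℝ) (b : ℝ≥0∞)
    (ψ : ℝ → ℝ) (f : α → ℝ) : ℝ≥0∞ :=
  ⨆ p ∈ expSet a b, eLpNorm f (ENNReal.ofReal p) μ / ENNReal.ofReal (ψ p)

/-- The class `Ψ(a,b)` (relative to a measure `μ`): positive continuous `ψ` on `(a,b)`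
with `ψ(b-0) = ∞`, admitting a representation `ψ(p) = ‖f‖_{L^p(μ)}` for `p ∈ (a,b)`, where
the measurable `f` lies in `L^p(μ)` for all `p ∈ (a,b)`. -/
def IsPsi {α : Type*} [MeasurableSpace α] (μ : Measure α) (a : ℝ) (b : ℝ≥0∞)
    (ψ : ℝ → ℝ) : Prop :=
  ContinuousOn ψ (expSet a b) ∧ (∀ p ∈ expSet a b, 0 < ψ p) ∧
    Filter.Tendsto ψ (atBbelow b) Filter.atTop ∧
    ∃ f : α → ℝ, AEStronglyMeasurable f μ ∧
      ∀ p ∈ expSet a b, eLpNorm f (ENNReal.ofReal p) μ = ENNReal.ofReal (ψ p)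

/-- The fundamental function `φ(G(ψ;a,b), s) = sup_{p ∈ (a,b)} s^{1/p}/ψ(p)`, real-valued. -/
def fundR (a : ℝ) (b : ℝ≥0∞) (ψ : ℝ → ℝ) (s : ℝ) : ℝ :=
  ⨆ p : expSet a b, s ^ (1 / (p : ℝ)) / ψ p

/-- The fundamental function `φ(G(ψ;a,b), δ) = sup_{p ∈ (a,b)} δ^{1/p}/ψ(p)`, `ℝ≥0∞`-valued. -/
def fundE (a : ℝ) (b : ℝ≥0∞) (ψ : ℝ → ℝ) (δ : ℝ≥0∞) : ℝ≥0∞ :=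
  ⨆ p ∈ expSet a b, δ ^ (1 / p) / ENNReal.ofReal (ψ p)

/-- The matrix dilation operator `(D_A f)(x) = f(A⁻¹ x)` on functions on `ℝ^n`. -/
def matDilate {n : ℕ} (A : Matrix (Fin n) (Fin n) ℝ) (f : (Fin n → ℝ) → ℝ) :
    (Fin n → ℝ) → ℝ := fun x => f (A⁻¹.mulVec x)

/-- The operator norm `‖D_A‖(G(ψ, μ) → G(ζ, μ))` of the matrix dilation operator. -/
def matOpNorm {n : ℕ} (μ : Measure (Fin n → ℝ)) (a : ℝ) (b : ℝ≥0∞) (ψ ζ : ℝ → ℝ)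
    (A : Matrix (Fin n) (Fin n) ℝ) : ℝ≥0∞ :=
  ⨆ f : {f : (Fin n → ℝ) → ℝ // AEStronglyMeasurable f μ},
    GNorm μ a b ζ (matDilate A f.1) / GNorm μ a b ψ f.1


section Helpers

variable {a : ℝ} {b : ℝ≥0∞}

lemma expSet_pos (ha : 1 ≤ a) {p : ℝ} (hp : p ∈ expSet a b) : 0 < p :=
  lt_of_lt_of_le one_pos (ha.trans hp.1.le)

/-- There are points of `expSet` arbitrarily close to `a`. -/
lemma exists_near_a (ha : 1 ≤ a) (hab : ENNReal.ofReal a < b) {ε : ℝ} (hε : 0 < ε) :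
    ∃ p ∈ expSet a b, p < a + ε := by
  have h1 : ∀ᶠ t in 𝓝[>] a, t < a + ε := by
    filter_upwards [nhdsWithin_le_nhds (gt_mem_nhds (by linarith : a < a + ε))] with t ht
    exact ht
  have h2 : ∀ᶠ t in 𝓝[>] a, ENNReal.ofReal t < b := by
    have hc : Tendsto (fun t : ℝ => ENNReal.ofReal t) (𝓝[>] a) (𝓝 (ENNReal.ofReal a)) :=
      (ENNReal.continuous_ofReal.tendsto a).mono_left nhdsWithin_le_nhds
    exact hc.eventually (Filter.Tendsto.eventually_lt_const hab tendsto_id)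
  have h3 : ∀ᶠ t in 𝓝[>] a, a < t := eventually_mem_nhdsWithin
  obtain ⟨p, hp1, hp2, hp3⟩ := (h1.and (h2.and h3)).exists
  exact ⟨p, ⟨hp3, hp2⟩, hp1⟩

lemma expSet_nonempty (ha : 1 ≤ a) (hab : ENNReal.ofReal a < b) : (expSet a b).Nonempty := by
  obtain ⟨p, hp, -⟩ := exists_near_a ha hab one_pos
  exact ⟨p, hp⟩

/-- `b⁻¹.toReal ≤ 1/p` for `p ∈ expSet a b`. -/
lemma inv_b_le (ha : 1 ≤ a) {p : ℝ} (hp : p ∈ expSet a b) : b⁻¹.toReal ≤ 1 / p := by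
  rcases eq_or_ne b ⊤ with hb | hb
  · have hp0 : 0 < p := expSet_pos ha hp
    simp [hb]
    positivity
  · have hp0 : 0 < p := expSet_pos ha hp
    have hpb : p < b.toReal := by
      have := hp.2
      rw [ENNReal.ofReal_lt_iff_lt_toReal hp0.le hb] at this
      exact this
    rw [ENNReal.toReal_inv]
    rw [one_div]
    exact inv_anti₀ hp0 hpb.le

/-- There are points of `expSet` with `1/p` arbitrarily close to `b⁻¹.toReal`. -/
lemma exists_near_b (ha : 1 ≤ a) (hab : ENNReal.ofReal a < b) {ε : ℝ} (hε : 0 < ε) :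
    ∃ p ∈ expSet a b, 1 / p < b⁻¹.toReal + ε := by
  rcases eq_or_ne b ⊤ with hb | hb
  · refine ⟨max (a + 1) (2 / ε), ⟨?_, by simp [hb]⟩, ?_⟩
    · exact lt_of_lt_of_le (by linarith) (le_max_left _ _)
    · have h2 : (0:ℝ) < max (a + 1) (2 / ε) := lt_of_lt_of_le (by linarith) (le_max_left _ _)
      have : 2 / ε ≤ max (a + 1) (2 / ε) := le_max_right _ _
      rw [hb]
      simp only [ENNReal.inv_top, ENNReal.toReal_zero, zero_add]
      rw [div_lt_iff₀ h2]
      have hεhalf : 2 / ε * ε = 2 := by field_simp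
      nlinarith [mul_le_mul_of_nonneg_right this hε.le]
  · set b' := b.toReal with hb'
    have hb'a : a < b' := by
      have := hab
      rw [ENNReal.ofReal_lt_iff_lt_toReal (by linarith) hb] at this
      exact this
    have hb'0 : 0 < b' := by linarith
    have hL : b⁻¹.toReal = 1 / b' := by rw [ENNReal.toReal_inv, one_div]
    have hcont : Tendsto (fun t : ℝ => 1 / t) (𝓝[<] b') (𝓝 (1 / b')) :=
      ((continuousAt_const.div continuousAt_id hb'0.ne').tendsto).mono_left nhdsWithin_le_nhds
    have h1 : ∀ᶠ t in 𝓝[<] b', 1 / t < 1 / b' + ε :=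
      hcont.eventually (Filter.Tendsto.eventually_lt_const (by linarith) tendsto_id)
    have h2 : ∀ᶠ t in 𝓝[<] b', a < t :=
      nhdsWithin_le_nhds (eventually_gt_nhds hb'a)
    have h3 : ∀ᶠ t in 𝓝[<] b', t < b' := eventually_mem_nhdsWithin
    obtain ⟨p, hp1, hp2, hp3⟩ := (h1.and (h2.and h3)).exists
    refine ⟨p, ⟨hp2, ?_⟩, by rw [hL]; exact hp1⟩
    rw [ENNReal.ofReal_lt_iff_lt_toReal (by linarith) hb]
    exact hp3

end Helpers

lemma eLpNorm_matDilate {n : ℕ} {A : Matrix (Fin n) (Fin n) ℝ} (hA : A.det ≠ 0)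
    {f : (Fin n → ℝ) → ℝ} (hf : AEStronglyMeasurable f (volume : Measure (Fin n → ℝ)))
    {p : ℝ} (hp : 0 < p) :
    eLpNorm (matDilate A f) (ENNReal.ofReal p) volume =
      ENNReal.ofReal |A.det| ^ (1 / p) * eLpNorm f (ENNReal.ofReal p) volume := by
  classical
  set T := Matrix.toLin' A⁻¹ with hT
  have hdetinv : (A⁻¹).det = A.det⁻¹ := by
    rw [Matrix.det_nonsing_inv, Ring.inverse_eq_inv']
  have hdet' : (A⁻¹).det ≠ 0 := by rw [hdetinv]; exact inv_ne_zero hA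
  have hmap : Measure.map T volume = ENNReal.ofReal |A.det| • volume := by
    rw [hT, Real.map_matrix_volume_pi_eq_smul_volume_pi hdet', hdetinv, inv_inv]
  have hcomp : matDilate A f = f ∘ T := by
    funext x
    simp [matDilate, hT, Matrix.toLin'_apply]
  have hc0 : ENNReal.ofReal |A.det| ≠ 0 := (ENNReal.ofReal_pos.2 (abs_pos.2 hA)).ne'
  have hTm : AEMeasurable T volume := (LinearMap.continuous_on_pi T).measurable.aemeasurable
  have hfm : AEStronglyMeasurable f (Measure.map T volume) := by
    rw [hmap]
    exact hf.mono_ac Measure.smul_absolutelyContinuous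
  rw [hcomp, ← eLpNorm_map_measure hfm hTm, hmap,
    eLpNorm_smul_measure_of_ne_zero hc0, smul_eq_mul]
  congr 1
  rw [one_div (ENNReal.ofReal p), ENNReal.toReal_inv, ENNReal.toReal_ofReal hp.le, one_div]

/-- Rearrangement in `ℝ≥0∞`: `x*y/(u*v) = (x/v) * (y/u)` for finite positive `u, v`. -/
lemma enn_rearrange {x y u v : ℝ≥0∞} (hu0 : u ≠ 0) (hut : u ≠ ⊤) (hv0 : v ≠ 0) (hvt : v ≠ ⊤) :
    x * y / (u * v) = (x / v) * (y / u) := by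
  rw [div_eq_mul_inv, div_eq_mul_inv, div_eq_mul_inv,
    ENNReal.mul_inv (Or.inl hu0) (Or.inl hut)]
  ring

lemma matOpNorm_eq {n : ℕ} {a : ℝ} {b : ℝ≥0∞} (ha : 1 ≤ a) (hab : ENNReal.ofReal a < b)
    {ψ ζ ν : ℝ → ℝ}
    (hψpos : ∀ p ∈ expSet a b, 0 < ψ p)
    (hrep : ∃ f : (Fin n → ℝ) → ℝ, AEStronglyMeasurable f (volume : Measure (Fin n → ℝ)) ∧
      ∀ p ∈ expSet a b, eLpNorm f (ENNReal.ofReal p) volume = ENNReal.ofReal (ψ p))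
    (hν1 : ∀ p ∈ expSet a b, 1 ≤ ν p)
    (hmul : ∀ p ∈ expSet a b, ζ p = ψ p * ν p)
    {A : Matrix (Fin n) (Fin n) ℝ} (hA : A.det ≠ 0) :
    matOpNorm (volume : Measure (Fin n → ℝ)) a b ψ ζ A =
      fundE a b ν (ENNReal.ofReal |A.det|) := by
  set δ : ℝ≥0∞ := ENNReal.ofReal |A.det| with hδ
  have hψ0 : ∀ p ∈ expSet a b, ENNReal.ofReal (ψ p) ≠ 0 :=
    fun p hp => (ENNReal.ofReal_pos.2 (hψpos p hp)).ne'
  have hν0 : ∀ p ∈ expSet a b, ENNReal.ofReal (ν p) ≠ 0 :=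
    fun p hp => (ENNReal.ofReal_pos.2 (lt_of_lt_of_le one_pos (hν1 p hp))).ne'
  have hζ_split : ∀ p ∈ expSet a b,
      ENNReal.ofReal (ζ p) = ENNReal.ofReal (ψ p) * ENNReal.ofReal (ν p) := by
    intro p hp
    rw [hmul p hp, ENNReal.ofReal_mul (hψpos p hp).le]
  -- The formula for GNorm of a dilate
  have hGdil : ∀ f : (Fin n → ℝ) → ℝ, AEStronglyMeasurable f (volume : Measure (Fin n → ℝ)) →
      GNorm volume a b ζ (matDilate A f) =
        ⨆ p ∈ expSet a b,
          (δ ^ (1 / p) / ENNReal.ofReal (ν p)) *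
            (eLpNorm f (ENNReal.ofReal p) volume / ENNReal.ofReal (ψ p)) := by
    intro f hf
    refine iSup_congr fun p => iSup_congr fun hp => ?_
    rw [eLpNorm_matDilate hA hf (expSet_pos ha hp), hζ_split p hp,
      enn_rearrange (hψ0 p hp) ENNReal.ofReal_ne_top (hν0 p hp) ENNReal.ofReal_ne_top]
  refine le_antisymm ?_ ?_
  · -- upper bound
    refine iSup_le fun f => ENNReal.div_le_of_le_mul ?_
    rw [hGdil f.1 f.2]
    refine iSup₂_le fun p hp => ?_
    refine mul_le_mul' ?_ ?_
    · exact le_iSup₂ (f := fun p (_ : p ∈ expSet a b) => δ ^ (1 / p) / ENNReal.ofReal (ν p)) p hp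
    · exact le_iSup₂ (f := fun p (_ : p ∈ expSet a b) =>
        eLpNorm f.1 (ENNReal.ofReal p) volume / ENNReal.ofReal (ψ p)) p hp
  · -- lower bound via the representing function
    obtain ⟨f₀, hf₀m, hf₀⟩ := hrep
    obtain ⟨p₀, hp₀⟩ := expSet_nonempty ha hab
    have hG1 : GNorm volume a b ψ f₀ = 1 := by
      have : ∀ p ∈ expSet a b,
          eLpNorm f₀ (ENNReal.ofReal p) volume / ENNReal.ofReal (ψ p) = 1 := by
        intro p hp
        rw [hf₀ p hp, ENNReal.div_self (hψ0 p hp) ENNReal.ofReal_ne_top]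
      refine le_antisymm (iSup₂_le fun p hp => (this p hp).le) ?_
      calc (1 : ℝ≥0∞) = eLpNorm f₀ (ENNReal.ofReal p₀) volume / ENNReal.ofReal (ψ p₀) :=
            (this p₀ hp₀).symm
        _ ≤ _ := le_iSup₂ (f := fun p (_ : p ∈ expSet a b) =>
            eLpNorm f₀ (ENNReal.ofReal p) volume / ENNReal.ofReal (ψ p)) p₀ hp₀
    have hGz : GNorm volume a b ζ (matDilate A f₀) = fundE a b ν δ := by
      rw [hGdil f₀ hf₀m]
      refine iSup_congr fun p => iSup_congr fun hp => ?_
      rw [hf₀ p hp, ENNReal.div_self (hψ0 p hp) ENNReal.ofReal_ne_top, mul_one]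
    calc fundE a b ν δ = GNorm volume a b ζ (matDilate A f₀) / GNorm volume a b ψ f₀ := by
          rw [hG1, hGz, div_one]
      _ ≤ _ := le_iSup (fun f : {f : (Fin n → ℝ) → ℝ // AEStronglyMeasurable f volume} =>
          GNorm volume a b ζ (matDilate A f.1) / GNorm volume a b ψ f.1) ⟨f₀, hf₀m⟩

section FundE

variable {a : ℝ} {b : ℝ≥0∞} {ν : ℝ → ℝ}

lemma fundE_term_le (ha : 1 ≤ a) (hν1 : ∀ p ∈ expSet a b, 1 ≤ ν p) {p : ℝ}
    (hp : p ∈ expSet a b) (δ : ℝ≥0∞) :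
    δ ^ (1 / p) / ENNReal.ofReal (ν p) ≤ δ ^ (1 / p) := by
  calc δ ^ (1 / p) / ENNReal.ofReal (ν p) ≤ δ ^ (1 / p) / 1 :=
        ENNReal.div_le_div_left (ENNReal.one_le_ofReal.2 (hν1 p hp)) _
    _ = δ ^ (1 / p) := div_one _

lemma fundE_le_of_one_le (ha : 1 ≤ a) (hν1 : ∀ p ∈ expSet a b, 1 ≤ ν p) {s : ℝ} (hs : 1 ≤ s) :
    fundE a b ν (ENNReal.ofReal s) ≤ ENNReal.ofReal (s ^ (1 / a)) := by
  refine iSup₂_le fun p hp => (fundE_term_le ha hν1 hp _).trans ?_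
  have h1 : (1 : ℝ≥0∞) ≤ ENNReal.ofReal s := ENNReal.one_le_ofReal.2 hs
  have h2 : 1 / p ≤ 1 / a := by
    refine one_div_le_one_div_of_le (by linarith) hp.1.le
  calc ENNReal.ofReal s ^ (1 / p) ≤ ENNReal.ofReal s ^ (1 / a) :=
        ENNReal.rpow_le_rpow_of_exponent_le h1 h2
    _ = ENNReal.ofReal (s ^ (1 / a)) := ENNReal.ofReal_rpow_of_pos (by linarith)

lemma fundE_le_of_le_one (ha : 1 ≤ a) (hν1 : ∀ p ∈ expSet a b, 1 ≤ ν p) {s : ℝ}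
    (hs0 : 0 < s) (hs : s ≤ 1) :
    fundE a b ν (ENNReal.ofReal s) ≤ ENNReal.ofReal (s ^ b⁻¹.toReal) := by
  refine iSup₂_le fun p hp => (fundE_term_le ha hν1 hp _).trans ?_
  have h1 : ENNReal.ofReal s ≤ 1 := ENNReal.ofReal_le_one.2 hs
  calc ENNReal.ofReal s ^ (1 / p) ≤ ENNReal.ofReal s ^ b⁻¹.toReal :=
        ENNReal.rpow_le_rpow_of_exponent_ge h1 (inv_b_le ha hp)
    _ = ENNReal.ofReal (s ^ b⁻¹.toReal) := ENNReal.ofReal_rpow_of_pos hs0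

lemma fundE_ne_top (ha : 1 ≤ a) (hν1 : ∀ p ∈ expSet a b, 1 ≤ ν p) {s : ℝ} (hs0 : 0 < s) :
    fundE a b ν (ENNReal.ofReal s) ≠ ⊤ := by
  rcases le_total 1 s with hs | hs
  · exact ((fundE_le_of_one_le ha hν1 hs).trans_lt ENNReal.ofReal_lt_top).ne
  · exact ((fundE_le_of_le_one ha hν1 hs0 hs).trans_lt ENNReal.ofReal_lt_top).ne

lemma fundE_toReal_lower (ha : 1 ≤ a) (hν1 : ∀ p ∈ expSet a b, 1 ≤ ν p) {s : ℝ} (hs0 : 0 < s)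
    {p : ℝ} (hp : p ∈ expSet a b) :
    s ^ (1 / p) / ν p ≤ (fundE a b ν (ENNReal.ofReal s)).toReal := by
  have hterm : ENNReal.ofReal s ^ (1 / p) / ENNReal.ofReal (ν p) ≤
      fundE a b ν (ENNReal.ofReal s) :=
    le_iSup₂ (f := fun p (_ : p ∈ expSet a b) =>
      ENNReal.ofReal s ^ (1 / p) / ENNReal.ofReal (ν p)) p hp
  have := ENNReal.toReal_mono (fundE_ne_top ha hν1 hs0) hterm
  rwa [ENNReal.toReal_div, ENNReal.ofReal_rpow_of_pos hs0, ENNReal.toReal_ofReal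
    (Real.rpow_nonneg hs0.le _), ENNReal.toReal_ofReal (by linarith [hν1 p hp])] at this

lemma fundE_toReal_pos (ha : 1 ≤ a) (hab : ENNReal.ofReal a < b)
    (hν1 : ∀ p ∈ expSet a b, 1 ≤ ν p) {s : ℝ} (hs0 : 0 < s) :
    0 < (fundE a b ν (ENNReal.ofReal s)).toReal := by
  obtain ⟨p₀, hp₀⟩ := expSet_nonempty ha hab
  refine lt_of_lt_of_le ?_ (fundE_toReal_lower ha hν1 hs0 hp₀)
  exact div_pos (Real.rpow_pos_of_pos hs0 _) (by linarith [hν1 p₀ hp₀])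

lemma fundE_toReal_upper_one_le (ha : 1 ≤ a) (hν1 : ∀ p ∈ expSet a b, 1 ≤ ν p) {s : ℝ}
    (hs : 1 ≤ s) : (fundE a b ν (ENNReal.ofReal s)).toReal ≤ s ^ (1 / a) :=
  ENNReal.toReal_le_of_le_ofReal (Real.rpow_nonneg (by linarith) _)
    (fundE_le_of_one_le ha hν1 hs)

lemma fundE_toReal_upper_le_one (ha : 1 ≤ a) (hν1 : ∀ p ∈ expSet a b, 1 ≤ ν p) {s : ℝ}
    (hs0 : 0 < s) (hs : s ≤ 1) :
    (fundE a b ν (ENNReal.ofReal s)).toReal ≤ s ^ b⁻¹.toReal :=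
  ENNReal.toReal_le_of_le_ofReal (Real.rpow_nonneg hs0.le _)
    (fundE_le_of_le_one ha hν1 hs0 hs)

/-- The limit at `+∞`. -/
lemma tendsto_log_fundE_atTop (ha : 1 ≤ a) (hab : ENNReal.ofReal a < b)
    (hν1 : ∀ p ∈ expSet a b, 1 ≤ ν p) :
    Tendsto (fun s : ℝ => Real.log ((fundE a b ν (ENNReal.ofReal s)).toReal) / Real.log s)
      atTop (𝓝 (1 / a)) := by
  have ha0 : 0 < a := by linarith
  rw [Metric.tendsto_atTop]
  intro ε hε
  obtain ⟨p₀, hp₀, hp₀a⟩ := exists_near_a ha hab (show (0:ℝ) < ε / 4 by linarith)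
  have hp₀pos : 0 < p₀ := expSet_pos ha hp₀
  have hinv : 1 / a - ε / 4 ≤ 1 / p₀ := by
    have h1 : 1 / p₀ ≥ 1 / (a + ε / 4) := one_div_le_one_div_of_le hp₀pos hp₀a.le
    have h2 : 1 / a - 1 / (a + ε / 4) = (ε/4) / (a * (a + ε / 4)) := by
      field_simp
      ring
    have hkey : 1 ≤ a * (a + ε / 4) := by nlinarith
    have h3 : (ε/4) / (a * (a + ε / 4)) ≤ ε / 4 := by
      rw [div_le_iff₀ (by nlinarith)]
      nlinarith [mul_le_mul_of_nonneg_left hkey (by linarith : (0:ℝ) ≤ ε/4)]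
    linarith
  set C := Real.log (ν p₀) with hC
  have hC0 : 0 ≤ C := Real.log_nonneg (hν1 p₀ hp₀)
  refine ⟨max 2 (Real.exp (4 * C / ε)), fun s hs => ?_⟩
  have hs2 : 2 ≤ s := le_trans (le_max_left _ _) hs
  have hs0 : 0 < s := by linarith
  have hlogs : 0 < Real.log s := Real.log_pos (by linarith)
  have hslog : 4 * C / ε ≤ Real.log s := by
    rw [Real.le_log_iff_exp_le hs0]
    exact le_trans (le_max_right _ _) hs
  set F := (fundE a b ν (ENNReal.ofReal s)).toReal with hF
  have hF0 : 0 < F := fundE_toReal_pos ha hab hν1 hs0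
  -- upper bound
  have hup : Real.log F / Real.log s ≤ 1 / a := by
    rw [div_le_iff₀ hlogs]
    calc Real.log F ≤ Real.log (s ^ (1 / a)) :=
          Real.log_le_log hF0 (fundE_toReal_upper_one_le ha hν1 (by linarith))
      _ = 1 / a * Real.log s := Real.log_rpow hs0 _
  -- lower bound
  have hlow : 1 / p₀ - C / Real.log s ≤ Real.log F / Real.log s := by
    rw [le_div_iff₀ hlogs]
    have h1 : s ^ (1 / p₀) / ν p₀ ≤ F := fundE_toReal_lower ha hν1 hs0 hp₀
    have h2 : Real.log (s ^ (1 / p₀) / ν p₀) ≤ Real.log F :=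
      Real.log_le_log (div_pos (Real.rpow_pos_of_pos hs0 _) (by linarith [hν1 p₀ hp₀])) h1
    rw [Real.log_div (Real.rpow_pos_of_pos hs0 _).ne' (by linarith [hν1 p₀ hp₀] : ν p₀ ≠ 0),
      Real.log_rpow hs0] at h2
    have h3 : (C / Real.log s) * Real.log s = C := div_mul_cancel₀ _ hlogs.ne'
    nlinarith
  have hCsmall : C / Real.log s ≤ ε / 4 := by
    rw [div_le_iff₀ hlogs]
    have h4 : 4 * C ≤ Real.log s * ε := (div_le_iff₀ hε).1 hslog
    nlinarith
  rw [Real.dist_eq, abs_lt]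
  constructor <;> nlinarith

/-- The limit at `0⁺`. -/
lemma tendsto_log_fundE_zero (ha : 1 ≤ a) (hab : ENNReal.ofReal a < b)
    (hν1 : ∀ p ∈ expSet a b, 1 ≤ ν p) :
    Tendsto (fun s : ℝ => Real.log ((fundE a b ν (ENNReal.ofReal s)).toReal) / Real.log s)
      (𝓝[>] (0:ℝ)) (𝓝 b⁻¹.toReal) := by
  set L := b⁻¹.toReal with hLdef
  have hL0 : 0 ≤ L := ENNReal.toReal_nonneg
  rw [Metric.tendsto_nhdsWithin_nhds]
  intro ε hε
  obtain ⟨p₀, hp₀, hp₀b⟩ := exists_near_b ha hab (show (0:ℝ) < ε / 4 by linarith)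
  have hp₀pos : 0 < p₀ := expSet_pos ha hp₀
  set C := Real.log (ν p₀) with hC
  have hC0 : 0 ≤ C := Real.log_nonneg (hν1 p₀ hp₀)
  refine ⟨min (1/2) (Real.exp (-(4 * C / ε + 1))), lt_min (by norm_num) (Real.exp_pos _), ?_⟩
  intro s hs hdist
  have hs0 : 0 < s := hs
  rw [Real.dist_eq, sub_zero, abs_of_pos hs0] at hdist
  have hs1 : s < 1 := lt_of_lt_of_le (hdist.trans_le (min_le_left _ _)) (by norm_num)
  have hlogs : Real.log s < 0 := Real.log_neg hs0 hs1
  have hsexp : s < Real.exp (-(4 * C / ε + 1)) := hdist.trans_le (min_le_right _ _)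
  have hlogs2 : Real.log s < -(4 * C / ε + 1) := by
    have := Real.log_lt_log hs0 hsexp
    rwa [Real.log_exp] at this
  set F := (fundE a b ν (ENNReal.ofReal s)).toReal with hF
  have hF0 : 0 < F := fundE_toReal_pos ha hab hν1 hs0
  -- lower bound on h: h ≥ L
  have hlow : L ≤ Real.log F / Real.log s := by
    rw [le_div_iff_of_neg hlogs]
    calc Real.log F ≤ Real.log (s ^ L) :=
          Real.log_le_log hF0 (fundE_toReal_upper_le_one ha hν1 hs0 hs1.le)
      _ = L * Real.log s := Real.log_rpow hs0 _
  -- upper bound on h: h ≤ 1/p₀ - C / log s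
  have hup : Real.log F / Real.log s ≤ 1 / p₀ - C / Real.log s := by
    rw [div_le_iff_of_neg hlogs]
    have h1 : s ^ (1 / p₀) / ν p₀ ≤ F := fundE_toReal_lower ha hν1 hs0 hp₀
    have h2 : Real.log (s ^ (1 / p₀) / ν p₀) ≤ Real.log F :=
      Real.log_le_log (div_pos (Real.rpow_pos_of_pos hs0 _) (by linarith [hν1 p₀ hp₀])) h1
    rw [Real.log_div (Real.rpow_pos_of_pos hs0 _).ne' (by linarith [hν1 p₀ hp₀] : ν p₀ ≠ 0),
      Real.log_rpow hs0] at h2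
    have h3 : (C / Real.log s) * Real.log s = C := div_mul_cancel₀ _ hlogs.ne
    nlinarith
  have hCsmall : -(C / Real.log s) ≤ ε / 4 := by
    have hrw : -(C / Real.log s) = C / (-Real.log s) := (div_neg (a := C) (b := Real.log s)).symm
    rw [hrw, div_le_iff₀ (by linarith : (0:ℝ) < -Real.log s)]
    have hfs : ε * (4 * C / ε) = 4 * C := by field_simp
    have hm : ε * Real.log s < ε * (-(4 * C / ε + 1)) := by
      exact mul_lt_mul_of_pos_left hlogs2 hε
    nlinarith
  rw [Real.dist_eq, abs_lt]
  constructor <;> nlinarith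
end FundE


/-- Let `X = ℝ^n` with Lebesgue measure, `ψ ∈ Ψ(a,b)`, `ζ, ν ∈ EΨ(a,b)`,
`ζ = ψ·ν`. Then, as `A` ranges over non-degenerate `n×n` matrices,
`log ‖D_A‖(G(ψ)→G(ζ)) / log |det A| → 1/a` as `|det A| → ∞`, and
`log ‖D_A‖(G(ψ)→G(ζ)) / log |det A| → 1/b` as `|det A| → 0` (so `0` when `b = ∞`). -/
theorem matrix_dilation_log_opNorm_limits (n : ℕ)
    (a : ℝ) (b : ℝ≥0∞) (ha : 1 ≤ a) (hab : ENNReal.ofReal a < b)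
    (ψ ζ ν : ℝ → ℝ) (hψ : IsPsi (volume : Measure (Fin n → ℝ)) a b ψ)
    (hζ : IsEPsi a b ζ) (hν : IsEPsi a b ν)
    (hmul : ∀ p ∈ expSet a b, ζ p = ψ p * ν p) :
    Tendsto
        (fun A : {A : Matrix (Fin n) (Fin n) ℝ // A.det ≠ 0} =>
          Real.log ((matOpNorm (volume : Measure (Fin n → ℝ)) a b ψ ζ A.1).toReal) /
            Real.log |A.1.det|)
        (Filter.comap (fun A : {A : Matrix (Fin n) (Fin n) ℝ // A.det ≠ 0} => |A.1.det|)
          atTop)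
        (𝓝 (1 / a)) ∧
      Tendsto
        (fun A : {A : Matrix (Fin n) (Fin n) ℝ // A.det ≠ 0} =>
          Real.log ((matOpNorm (volume : Measure (Fin n → ℝ)) a b ψ ζ A.1).toReal) /
            Real.log |A.1.det|)
        (Filter.comap (fun A : {A : Matrix (Fin n) (Fin n) ℝ // A.det ≠ 0} => |A.1.det|)
          (𝓝[>] (0 : ℝ)))
        (𝓝 (b⁻¹.toReal)) := by
  have hν1 := hν.2.1
  have hkey : ∀ A : {A : Matrix (Fin n) (Fin n) ℝ // A.det ≠ 0},
      Real.log ((matOpNorm (volume : Measure (Fin n → ℝ)) a b ψ ζ A.1).toReal) /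
        Real.log |A.1.det| =
      ((fun s : ℝ => Real.log ((fundE a b ν (ENNReal.ofReal s)).toReal) / Real.log s) ∘
        (fun A : {A : Matrix (Fin n) (Fin n) ℝ // A.det ≠ 0} => |A.1.det|)) A := by
    intro A
    simp only [Function.comp_apply]
    rw [matOpNorm_eq ha hab hψ.2.1 hψ.2.2.2 hν1 hmul A.2]
  constructor
  · have := (tendsto_log_fundE_atTop ha hab hν1).comp
      (tendsto_comap (f := fun A : {A : Matrix (Fin n) (Fin n) ℝ // A.det ≠ 0} => |A.1.det|)
       )
    exact this.congr (fun A => (hkey A).symm)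
  · have := (tendsto_log_fundE_zero ha hab hν1).comp
      (tendsto_comap (f := fun A : {A : Matrix (Fin n) (Fin n) ℝ // A.det ≠ 0} => |A.1.det|)
       )
    exact this.congr (fun A => (hkey A).symm)
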